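/- Let m and n be distinct positive integers and C an additive category. If C is both m-abelian and n-abelian, then C is semisimple. -/

import Mathlib

open CategoryTheory CategoryTheory.Limits

universe v u

namespace NHomAlg

variable {C : Type u} [Category.{v} C]

/-- `g` is a weak cokernel of `f`. -/
def IsWeakCokernel [HasZeroMorphisms C] {A B Z : C} (f : A ⟶ B) (g : B ⟶ Z) : Prop :=
  f ≫ g = 0 ∧ ∀ ⦃W : C⦄ (h : B ⟶ W), f ≫ h = 0 → ∃ p : Z ⟶ W, g ≫ p = h

/-- `g` is a weak kernel of `f`. -/
def IsWeakKernel [HasZeroMorphisms C] {A B Z : C} (g : Z ⟶ A) (f : A ⟶ B) : Prop :=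
  g ≫ f = 0 ∧ ∀ ⦃W : C⦄ (h : W ⟶ A), h ≫ f = 0 → ∃ p : W ⟶ Z, p ≫ g = h

variable [Preadditive C]

/-- The complex `K` is concentrated in degrees `≤ m`. -/
def ConcentratedBelow (m : ℕ) (K : CochainComplex C ℕ) : Prop :=
  ∀ k, m < k → IsZero (K.X k)

/-- `(d^1, …, d^n)` is an `n`-cokernel of `d^0`, i.e. for every object `Z` the induced
sequence `0 → Hom(K.X (n+1), Z) → ⋯ → Hom(K.X 1, Z) → Hom(K.X 0, Z)` is exact. -/
def IsNCokernelSeq (n : ℕ) (K : CochainComplex C ℕ) : Prop :=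
  (∀ k, 1 ≤ k → k ≤ n → ∀ ⦃Z : C⦄ (h : K.X k ⟶ Z), K.d (k-1) k ≫ h = 0 →
      ∃ p : K.X (k+1) ⟶ Z, K.d k (k+1) ≫ p = h) ∧
  (∀ ⦃Z : C⦄ (h h' : K.X (n+1) ⟶ Z), K.d n (n+1) ≫ h = K.d n (n+1) ≫ h' → h = h')

/-- `(d^0, …, d^{n-1})` is an `n`-kernel of `d^n`. -/
def IsNKernelSeq (n : ℕ) (K : CochainComplex C ℕ) : Prop :=
  (∀ k, 1 ≤ k → k ≤ n → ∀ ⦃Z : C⦄ (h : Z ⟶ K.X k), h ≫ K.d k (k+1) = 0 →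
      ∃ p : Z ⟶ K.X (k-1), p ≫ K.d (k-1) k = h) ∧
  (∀ ⦃Z : C⦄ (h h' : Z ⟶ K.X 0), h ≫ K.d 0 1 = h' ≫ K.d 0 1 → h = h')

/-- An `n`-exact sequence. -/
def IsNExactSeq (n : ℕ) (K : CochainComplex C ℕ) : Prop :=
  IsNKernelSeq n K ∧ IsNCokernelSeq n K

/-- The morphism `f` admits an `n`-cokernel. -/
def HasNCokernel (n : ℕ) {A B : C} (f : A ⟶ B) : Prop :=
  ∃ (K : CochainComplex C ℕ) (eA : A ≅ K.X 0) (eB : B ≅ K.X 1),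
    eA.hom ≫ K.d 0 1 = f ≫ eB.hom ∧ IsNCokernelSeq n K

/-- The morphism `f` admits an `n`-kernel. -/
def HasNKernel (n : ℕ) {A B : C} (f : A ⟶ B) : Prop :=
  ∃ (K : CochainComplex C ℕ) (eA : A ≅ K.X n) (eB : B ≅ K.X (n+1)),
    eA.hom ≫ K.d n (n+1) = f ≫ eB.hom ∧ IsNKernelSeq n K

/-- `n`-abelian category (axioms (A0), (A1), (A2), (A2ᵒᵖ)). -/
def IsNAbelian (n : ℕ) (C : Type u) [Category.{v} C] [Preadditive C] : Prop :=
  IsIdempotentComplete C ∧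
  (∀ ⦃A B : C⦄ (f : A ⟶ B), HasNCokernel n f ∧ HasNKernel n f) ∧
  (∀ K : CochainComplex C ℕ, Mono (K.d 0 1) → IsNCokernelSeq n K → IsNExactSeq n K) ∧
  (∀ K : CochainComplex C ℕ, Epi (K.d n (n+1)) → IsNKernelSeq n K → IsNExactSeq n K)

/-- Semisimple additive category: every morphism factors as a split epi followed by a
split mono. -/
def Semisimple (C : Type u) [Category.{v} C] : Prop :=
  ∀ ⦃A B : C⦄ (f : A ⟶ B), ∃ (I : C) (p : A ⟶ I) (i : I ⟶ B),
    IsSplitEpi p ∧ IsSplitMono i ∧ p ≫ i = f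

/-- `g : X → Y` (a family of morphisms in degrees `0, …, n`) is an `n`-pushout diagram:
in the mapping cone `X^0 → X^1 ⊕ Y^0 → ⋯ → X^n ⊕ Y^{n-1} → Y^n` the sequence
`(d_C^0, …, d_C^{n-1})` is an `n`-cokernel of `d_C^{-1}`; all conditions are spelled out
componentwise. -/
def IsNPushoutFam (n : ℕ) (X Y : CochainComplex C ℕ) (g : ∀ k, X.X k ⟶ Y.X k) : Prop :=
  (∀ k, k < n → X.d k (k+1) ≫ g (k+1) = g k ≫ Y.d k (k+1)) ∧
  (∀ j, 1 ≤ j → j < n → ∀ ⦃Z : C⦄ (u : X.X j ⟶ Z) (v : Y.X (j-1) ⟶ Z),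
      X.d (j-1) j ≫ u = g (j-1) ≫ v → Y.d (j-2) (j-1) ≫ v = 0 →
      ∃ (u' : X.X (j+1) ⟶ Z) (v' : Y.X j ⟶ Z),
        u = g j ≫ v' - X.d j (j+1) ≫ u' ∧ v = Y.d (j-1) j ≫ v') ∧
  (∀ ⦃Z : C⦄ (u : X.X n ⟶ Z) (v : Y.X (n-1) ⟶ Z),
      X.d (n-1) n ≫ u = g (n-1) ≫ v → Y.d (n-2) (n-1) ≫ v = 0 →
      ∃ w : Y.X n ⟶ Z, u = g n ≫ w ∧ v = Y.d (n-1) n ≫ w) ∧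
  (∀ ⦃Z : C⦄ (w w' : Y.X n ⟶ Z),
      g n ≫ w = g n ≫ w' → Y.d (n-1) n ≫ w = Y.d (n-1) n ≫ w' → w = w')

/-- The same-shape dual notion: the diagram `g : X → Y` is an `n`-pullback diagram,
i.e. in the mapping cone the sequence `(d_C^{-1}, d_C^0, …, d_C^{n-2})` is an
`n`-kernel of `d_C^{n-1}`. -/
def IsNPulledBackFam (n : ℕ) (X Y : CochainComplex C ℕ) (g : ∀ k, X.X k ⟶ Y.X k) : Prop :=
  (∀ k, k < n → X.d k (k+1) ≫ g (k+1) = g k ≫ Y.d k (k+1)) ∧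
  (∀ ⦃Z : C⦄ (w w' : Z ⟶ X.X 0),
      w ≫ X.d 0 1 = w' ≫ X.d 0 1 → w ≫ g 0 = w' ≫ g 0 → w = w') ∧
  (∀ j, 1 ≤ j → j < n → ∀ ⦃Z : C⦄ (v : Z ⟶ X.X j) (u : Z ⟶ Y.X (j-1)),
      v ≫ X.d j (j+1) = 0 → v ≫ g j + u ≫ Y.d (j-1) j = 0 →
      ∃ (w : Z ⟶ X.X (j-1)) (x : Z ⟶ Y.X (j-2)),
        v = -(w ≫ X.d (j-1) j) ∧ u = w ≫ g (j-1) + x ≫ Y.d (j-2) (j-1)) ∧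
  (∀ ⦃Z : C⦄ (v : Z ⟶ X.X n) (u : Z ⟶ Y.X (n-1)),
      v ≫ g n + u ≫ Y.d (n-1) n = 0 →
      ∃ (w : Z ⟶ X.X (n-1)) (x : Z ⟶ Y.X (n-2)),
        v = -(w ≫ X.d (n-1) n) ∧ u = w ≫ g (n-1) + x ≫ Y.d (n-2) (n-1))

/-- An `n`-pullback diagram of the sequence `(d_K^1, …, d_K^n)` of `K` along a morphism to
`K.X (n+1)`: here `Y` is a complex concentrated in degrees `0, …, n` (playing the role of
degrees `1, …, n+1`) and `g k : Y.X k ⟶ K.X (k+1)`. -/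
def IsNPullbackAlongFam (n : ℕ) (Y K : CochainComplex C ℕ) (g : ∀ k, Y.X k ⟶ K.X (k+1)) :
    Prop :=
  (∀ k, k < n → Y.d k (k+1) ≫ g (k+1) = g k ≫ K.d (k+1) (k+2)) ∧
  (∀ ⦃Z : C⦄ (w w' : Z ⟶ Y.X 0),
      w ≫ Y.d 0 1 = w' ≫ Y.d 0 1 → w ≫ g 0 = w' ≫ g 0 → w = w') ∧
  (∀ ⦃Z : C⦄ (v : Z ⟶ Y.X 1) (u : Z ⟶ K.X 1),
      v ≫ Y.d 1 2 = 0 → v ≫ g 1 = u ≫ K.d 1 2 →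
      ∃ w : Z ⟶ Y.X 0, v = w ≫ Y.d 0 1 ∧ u = w ≫ g 0) ∧
  (∀ i, 1 ≤ i → i + 1 ≤ n → ∀ ⦃Z : C⦄ (v : Z ⟶ Y.X (i+1)) (u : Z ⟶ K.X (i+1)),
      v ≫ Y.d (i+1) (i+2) = 0 → v ≫ g (i+1) = u ≫ K.d (i+1) (i+2) →
      ∃ (w : Z ⟶ Y.X i) (u' : Z ⟶ K.X i),
        v = w ≫ Y.d i (i+1) ∧ u = w ≫ g i - u' ≫ K.d i (i+1))

/-- A weak isomorphism of `n`-exact sequences: two consecutive components (cyclically,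
with the convention `n+2 := 0`) are isomorphisms. -/
def IsWeakIsoHom (n : ℕ) {K L : CochainComplex C ℕ} (f : K ⟶ L) : Prop :=
  (∃ k, k ≤ n ∧ IsIso (f.f k) ∧ IsIso (f.f (k+1))) ∨ (IsIso (f.f (n+1)) ∧ IsIso (f.f 0))

/-- `f` is an admissible monomorphism for the class `Xcl`. -/
def IsAdmMono (Xcl : CochainComplex C ℕ → Prop) {A B : C} (f : A ⟶ B) : Prop :=
  ∃ K, Xcl K ∧ ∃ (e0 : A ≅ K.X 0) (e1 : B ≅ K.X 1), e0.hom ≫ K.d 0 1 = f ≫ e1.hom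

/-- `f` is an admissible epimorphism for the class `Xcl`. -/
def IsAdmEpi (n : ℕ) (Xcl : CochainComplex C ℕ → Prop) {A B : C} (f : A ⟶ B) : Prop :=
  ∃ K, Xcl K ∧ ∃ (e0 : A ≅ K.X n) (e1 : B ≅ K.X (n+1)), e0.hom ≫ K.d n (n+1) = f ≫ e1.hom

/-- `Xcl` is an `n`-exact structure on `C` (axioms (E0), (E1), (E1ᵒᵖ), (E2), (E2ᵒᵖ),
together with closure under weak isomorphisms). -/
structure IsNExactStructure (n : ℕ) (Xcl : CochainComplex C ℕ → Prop) : Prop where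
  mem_nExact : ∀ ⦃K⦄, Xcl K → IsNExactSeq n K
  mem_concentrated : ∀ ⦃K⦄, Xcl K → ConcentratedBelow (n+1) K
  closed_weakIso : ∀ ⦃K L : CochainComplex C ℕ⦄ (f : K ⟶ L),
    IsNExactSeq n K → ConcentratedBelow (n+1) K →
    IsNExactSeq n L → ConcentratedBelow (n+1) L →
    IsWeakIsoHom n f → (Xcl K ↔ Xcl L)
  zero_mem : ∃ K, Xcl K ∧ ∀ k, IsZero (K.X k)
  admMono_comp : ∀ ⦃A B D : C⦄ (f : A ⟶ B) (g : B ⟶ D),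
    IsAdmMono Xcl f → IsAdmMono Xcl g → IsAdmMono Xcl (f ≫ g)
  admEpi_comp : ∀ ⦃A B D : C⦄ (f : A ⟶ B) (g : B ⟶ D),
    IsAdmEpi n Xcl f → IsAdmEpi n Xcl g → IsAdmEpi n Xcl (f ≫ g)
  pushout : ∀ ⦃K⦄, Xcl K → ∀ ⦃Y0 : C⦄ (f0 : K.X 0 ⟶ Y0),
    ∃ (Y : CochainComplex C ℕ) (g : ∀ k, K.X k ⟶ Y.X k) (e : Y.X 0 ≅ Y0),
      ConcentratedBelow n Y ∧ g 0 ≫ e.hom = f0 ∧ IsNPushoutFam n K Y g ∧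
      IsAdmMono Xcl (Y.d 0 1)
  pullback : ∀ ⦃K⦄, Xcl K → ∀ ⦃Z0 : C⦄ (gn : Z0 ⟶ K.X (n+1)),
    ∃ (Y : CochainComplex C ℕ) (g : ∀ k, Y.X k ⟶ K.X (k+1)) (e : Y.X n ≅ Z0),
      ConcentratedBelow n Y ∧ e.hom ≫ gn = g n ∧ IsNPullbackAlongFam n Y K g ∧
      IsAdmEpi n Xcl (Y.d (n-1) n)

end NHomAlg

section SemisimpleProofAux

open NHomAlg ZeroObject

variable {C : Type u} [Category.{v} C] [Preadditive C] [HasZeroObject C]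

/-- Kernel tower of height `k` over `f`. -/
def HT : ℕ → (A B : C) → (A ⟶ B) → Prop
  | 0, A, _, f => ∀ (Z : C) (h h' : Z ⟶ A), h ≫ f = h' ≫ f → h = h'
  | (k+1), A, _, f => ∃ (X : C) (w : X ⟶ A), w ≫ f = 0 ∧
      (∀ (Z : C) (h : Z ⟶ A), h ≫ f = 0 → ∃ p : Z ⟶ X, p ≫ w = h) ∧ HT k X A w

omit [HasZeroObject C] in
lemma HT_iso (k : ℕ) : ∀ {A B A' B' : C} (g : A ⟶ B) (a : A' ≅ A) (b : B ≅ B'),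
    HT k A B g → HT k A' B' (a.hom ≫ g ≫ b.hom) := by
  induction k with
  | zero =>
    intro A B A' B' g a b hg Z h h' hh
    simp only [← Category.assoc] at hh
    have h1 := (cancel_mono b.hom).1 hh
    have h2 := hg Z (h ≫ a.hom) (h' ≫ a.hom) (by simpa using h1)
    exact (cancel_mono a.hom).1 h2
  | succ k ih =>
    rintro A B A' B' g a b ⟨X, w, hw0, hfac, hrec⟩
    refine ⟨X, w ≫ a.inv, ?_, ?_, ?_⟩
    · rw [Category.assoc, Iso.inv_hom_id_assoc, ← Category.assoc, hw0, zero_comp]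
    · intro Z h hh
      have hh' : (h ≫ a.hom) ≫ g = 0 := by
        have h3 : ((h ≫ a.hom) ≫ g) ≫ b.hom = 0 := by simpa using hh
        simpa using (cancel_mono b.hom).1 (by simpa using h3)
      obtain ⟨p, hp⟩ := hfac Z (h ≫ a.hom) hh'
      exact ⟨p, by rw [← Category.assoc, hp, Category.assoc, Iso.hom_inv_id,
        Category.comp_id]⟩
    · have := ih w (Iso.refl X) a.symm hrec
      simpa using this

omit [HasZeroObject C] in
lemma idem_aux {X A : C} (w : X ⟶ A) (r : A ⟶ X) (hr : w ≫ r = 𝟙 X) :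
    (𝟙 A - r ≫ w) ≫ (𝟙 A - r ≫ w) = 𝟙 A - r ≫ w := by
  have h4 : (r ≫ w) ≫ r ≫ w = r ≫ w := by
    rw [Category.assoc, ← Category.assoc w r w, hr, Category.id_comp]
  simp only [Preadditive.comp_sub, Preadditive.sub_comp, Category.comp_id,
    Category.id_comp, h4]
  abel

omit [HasZeroObject C] in
lemma HT_down (msplit : ∀ {A B : C} (f : A ⟶ B), Mono f → ∃ r, f ≫ r = 𝟙 A)
    (hic : IsIdempotentComplete C) :
    ∀ (k : ℕ) {A B : C} (f : A ⟶ B), HT (k+2) A B f → HT (k+1) A B f := by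
  intro k
  induction k with
  | zero =>
    rintro A B f ⟨X, w, hw0, hfac, X', w', hw'0, hfac', hcan⟩
    have hmono : Mono w' := ⟨fun {Z} g h hh => hcan Z g h hh⟩
    obtain ⟨r, hr⟩ := msplit w' hmono
    obtain ⟨Q, j, q, hjq, hqj⟩ :=
      hic.idempotents_split X (𝟙 X - r ≫ w') (idem_aux w' r hr)
    have hw'q : w' ≫ q = 0 := by
      have h0 : (w' ≫ q) ≫ j = 0 := by
        rw [Category.assoc, hqj, Preadditive.comp_sub, Category.comp_id,
          ← Category.assoc, hr, Category.id_comp, sub_self]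
      have hj : Mono j := ⟨fun {Z} g h hh => by
        have := congrArg (· ≫ q) hh
        simpa [hjq] using this⟩
      exact (cancel_mono j).1 (by simpa using h0)
    refine ⟨Q, j ≫ w, ?_, ?_, ?_⟩
    · rw [Category.assoc, hw0, comp_zero]
    · intro Z h hh
      obtain ⟨p, hp⟩ := hfac Z h hh
      refine ⟨p ≫ q, ?_⟩
      rw [Category.assoc, ← Category.assoc q j w, hqj, Preadditive.sub_comp,
        Category.id_comp, Category.assoc, hw'0, comp_zero, sub_zero, hp]
    · intro Z g g' hh
      have hzero : (g - g') ≫ j ≫ w = 0 := by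
        rw [Preadditive.sub_comp, hh, sub_self]
      obtain ⟨p, hp⟩ := hfac' Z ((g - g') ≫ j) (by simpa using hzero)
      have hsub : g - g' = 0 := by
        have h1 : ((g - g') ≫ j) ≫ q = g - g' := by
          rw [Category.assoc, hjq, Category.comp_id]
        rw [← h1, ← hp, Category.assoc, hw'q, comp_zero]
      exact sub_eq_zero.1 hsub
  | succ k ih =>
    rintro A B f ⟨X, w, hw0, hfac, hrec⟩
    exact ⟨X, w, hw0, hfac, ih w hrec⟩

omit [HasZeroObject C] in
lemma HT_to_one (msplit : ∀ {A B : C} (f : A ⟶ B), Mono f → ∃ r, f ≫ r = 𝟙 A)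
    (hic : IsIdempotentComplete C) :
    ∀ (k : ℕ) {A B : C} (f : A ⟶ B), HT (k+1) A B f → HT 1 A B f := by
  intro k
  induction k with
  | zero => exact fun f h => h
  | succ k ih => exact fun f h => ih f (HT_down msplit hic k f h)

omit [HasZeroObject C] in
lemma HT_of_hasNKernel {n : ℕ} {A B : C} (f : A ⟶ B) (h : HasNKernel n f) :
    HT n A B f := by
  obtain ⟨K, eA, eB, hcomm, hker⟩ := h
  have main : ∀ j, j ≤ n → HT j (K.X j) (K.X (j+1)) (K.d j (j+1)) := by
    intro j
    induction j with
    | zero => exact fun _ Z h h' hh => hker.2 h h' hh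
    | succ j ih =>
      intro hj
      refine ⟨K.X j, K.d j (j+1), K.d_comp_d _ _ _, ?_, ih (by omega)⟩
      intro Z h hh
      exact hker.1 (j+1) (by omega) (by omega) h hh
  have hf : f = eA.hom ≫ K.d n (n+1) ≫ eB.symm.hom := by
    rw [← Category.assoc, hcomm, Category.assoc, Iso.symm_hom, Iso.hom_inv_id,
      Category.comp_id]
  rw [hf]
  exact HT_iso n (K.d n (n+1)) eA eB.symm (main n le_rfl)

/-! ### Padded complex -/

variable (m : ℕ) (K : CochainComplex C ℕ)

/-- Pad `K` with zero objects above degree `m+1`. -/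
noncomputable def padX (k : ℕ) : C := if k ≤ m+1 then K.X k else 0

lemma padX_eq {k : ℕ} (h : k ≤ m+1) : padX m K k = K.X k := if_pos h

lemma padX_isZero {k : ℕ} (h : ¬ (k ≤ m+1)) : IsZero (padX m K k) := by
  simp only [padX, if_neg h]
  exact isZero_zero C

/-- The differentials of the padded complex. -/
noncomputable def padD (k : ℕ) : padX m K k ⟶ padX m K (k+1) :=
  if h : k + 1 ≤ m + 1 then
    eqToHom (padX_eq m K (le_trans (Nat.le_succ k) h)) ≫ K.d k (k+1) ≫
      eqToHom (padX_eq m K h).symm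
  else 0

lemma padD_eq {k : ℕ} (h : k + 1 ≤ m + 1) :
    padD m K k = eqToHom (padX_eq m K (le_trans (Nat.le_succ k) h)) ≫ K.d k (k+1) ≫
      eqToHom (padX_eq m K h).symm := dif_pos h

lemma padD_eq_zero {k : ℕ} (h : ¬ (k + 1 ≤ m + 1)) : padD m K k = 0 := dif_neg h

lemma padD_sq (k : ℕ) : padD m K k ≫ padD m K (k+1) = 0 := by
  by_cases h2 : k + 2 ≤ m + 1
  · rw [padD_eq m K (by omega : k + 1 ≤ m + 1), padD_eq m K (by omega : k + 1 + 1 ≤ m + 1)]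
    simp
  · rw [padD_eq_zero m K (by omega : ¬ (k + 1 + 1 ≤ m + 1)), comp_zero]

/-- The padded complex. -/
noncomputable abbrev padC : CochainComplex C ℕ :=
  CochainComplex.of (padX m K) (padD m K) (padD_sq m K)

lemma padC_d (k : ℕ) : (padC m K).d k (k+1) = padD m K k :=
  CochainComplex.of_d _ _ _

lemma padC_cok {n : ℕ} (hmn : m < n) (hK : IsNCokernelSeq m K) :
    IsNCokernelSeq n (padC m K) := by
  constructor
  · intro k hk1 hkn Z h hzero
    obtain ⟨k, rfl⟩ : ∃ k', k = k'+1 := ⟨k-1, by omega⟩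
    have hz : (padC m K).d k (k+1) ≫ h = 0 := by
      simpa using hzero
    rw [padC_d] at hz
    by_cases hk2 : k + 2 ≤ m + 1
    · -- both in range
      rw [padD_eq m K (by omega : k + 1 ≤ m + 1)] at hz
      have hz' : K.d k (k+1) ≫ eqToHom (padX_eq m K (by omega : k+1 ≤ m+1)).symm ≫ h
          = 0 := by
        simpa using hz
      obtain ⟨p, hp⟩ := hK.1 (k+1) (by omega) (by omega)
        (eqToHom (padX_eq m K (by omega : k+1 ≤ m+1)).symm ≫ h) (by simpa using hz')
      refine ⟨eqToHom (padX_eq m K (by omega : k+2 ≤ m+1)) ≫ p, ?_⟩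
      have hd : (padC m K).d (k+1) (k+2) = padD m K (k+1) := padC_d m K (k+1)
      rw [hd, padD_eq m K (by omega : k + 1 + 1 ≤ m + 1)]
      have hp' : K.d (k+1) (k+2) ≫ p
          = eqToHom (padX_eq m K (by omega : k+1 ≤ m+1)).symm ≫ h := by
        simpa using hp
      simp only [Category.assoc, eqToHom_trans_assoc, eqToHom_refl, Category.id_comp]
      rw [hp']
      simp
    · by_cases hk3 : k + 1 ≤ m + 1
      · -- k = m : use right-cancellation
        have hkm : k = m := by omega
        subst hkm
        rw [padD_eq k K hk3] at hz
        have hz' : K.d k (k+1) ≫ eqToHom (padX_eq k K hk3).symm ≫ h = 0 := by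
          simpa using hz
        have hh0 : eqToHom (padX_eq k K hk3).symm ≫ h = 0 :=
          hK.2 _ 0 (by rw [comp_zero]; exact hz')
        have hzero' : h = 0 := by
          have := congrArg (fun x => eqToHom (padX_eq k K hk3) ≫ x) hh0
          simpa using this
        exact ⟨0, by rw [comp_zero, hzero']⟩
      · -- source is a zero object
        refine ⟨0, ?_⟩
        rw [comp_zero]
        exact (padX_isZero m K (by omega : ¬ (k+1 ≤ m+1))).eq_of_src 0 h
  · intro Z h h' _
    exact (padX_isZero m K (by omega : ¬ (n+1 ≤ m+1))).eq_of_src h h'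

omit [HasZeroObject C] in
/-- Descending contraction: a weak section at level `j` propagates down to an honest
retraction of `d 0 1`. -/
lemma descend (L : CochainComplex C ℕ) {n : ℕ} (hker : IsNKernelSeq n L) :
    ∀ j, j ≤ n →
      (∃ h : L.X (j+1) ⟶ L.X j, (L.d j (j+1) ≫ h) ≫ L.d j (j+1) = L.d j (j+1)) →
      ∃ h : L.X 1 ⟶ L.X 0, L.d 0 1 ≫ h = 𝟙 (L.X 0) := by
  intro j
  induction j with
  | zero =>
    rintro _ ⟨h, hh⟩
    exact ⟨h, hker.2 _ _ (by simpa using hh)⟩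
  | succ j ih =>
    rintro hjn ⟨h, hh⟩
    have ht : (𝟙 (L.X (j+1)) - L.d (j+1) (j+2) ≫ h) ≫ L.d (j+1) (j+2) = 0 := by
      rw [Preadditive.sub_comp, Category.id_comp, Category.assoc, ← Category.assoc,
        hh, sub_self]
    obtain ⟨p, hp⟩ := hker.1 (j+1) (by omega) (by omega) _ ht
    refine ih (by omega) ⟨p, ?_⟩
    have hp' : p ≫ L.d j (j+1) = 𝟙 (L.X (j+1)) - L.d (j+1) (j+2) ≫ h := by
      simpa using hp
    rw [Category.assoc, hp', Preadditive.comp_sub, Category.comp_id,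
      ← Category.assoc, L.d_comp_d, zero_comp, sub_zero]

/-- Every monomorphism splits when `C` is `m`- and `n`-abelian with `m < n`. -/
lemma mono_splits {m n : ℕ} (hmn : m < n) (hA : IsNAbelian m C) (hB : IsNAbelian n C)
    {A B : C} (f : A ⟶ B) (hf : Mono f) : ∃ r : B ⟶ A, f ≫ r = 𝟙 A := by
  obtain ⟨K, eA, eB, hcomm, hcok⟩ := (hA.2.1 f).1
  have hKd : K.d 0 1 = eA.inv ≫ f ≫ eB.hom := by
    rw [← hcomm, Iso.inv_hom_id_assoc]
  have hd01 : (padC m K).d 0 1 = eqToHom (padX_eq m K (by omega : (0:ℕ) ≤ m+1)) ≫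
      K.d 0 1 ≫ eqToHom (padX_eq m K (by omega : (1:ℕ) ≤ m+1)).symm := by
    rw [padC_d]
    exact padD_eq m K (by omega : (0:ℕ) + 1 ≤ m + 1)
  have hmono : Mono ((padC m K).d 0 1) := by
    rw [hd01, hKd]
    exact mono_comp _ _
  have hex := hB.2.2.1 (padC m K) hmono (padC_cok m K hmn hcok)
  have hS : ∃ h : (padC m K).X (m+1+1) ⟶ (padC m K).X (m+1),
      ((padC m K).d (m+1) (m+1+1) ≫ h) ≫ (padC m K).d (m+1) (m+1+1)
        = (padC m K).d (m+1) (m+1+1) := by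
    refine ⟨0, ?_⟩
    have hzd : (padC m K).d (m+1) (m+1+1) = 0 := by
      rw [padC_d]
      exact padD_eq_zero m K (by omega : ¬ (m+1+1 ≤ m+1))
    rw [hzd]
    simp
  obtain ⟨r', hr'⟩ := descend (padC m K) hex.1 (m+1) (by omega) hS
  refine ⟨eB.hom ≫ eqToHom (padX_eq m K (by omega : (1:ℕ) ≤ m+1)).symm ≫ r' ≫
    eqToHom (padX_eq m K (by omega : (0:ℕ) ≤ m+1)) ≫ eA.inv, ?_⟩
  have key : f ≫ eB.hom ≫ eqToHom (padX_eq m K (by omega : (1:ℕ) ≤ m+1)).symm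
      = eA.hom ≫ eqToHom (padX_eq m K (by omega : (0:ℕ) ≤ m+1)).symm ≫
        (padC m K).d 0 1 := by
    rw [hd01, hKd]
    simp
  rw [reassoc_of% key, reassoc_of% hr']
  simp

end SemisimpleProofAux


open NHomAlg in
/-- If `m ≠ n` are positive integers and `C` is both `m`-abelian and `n`-abelian, then `C`
is semisimple. -/
theorem semisimple_of_mAbelian_nAbelian (C : Type u) [Category.{v} C] [Preadditive C]
    [HasZeroObject C] [HasBinaryBiproducts C] (m n : ℕ) (hm : 1 ≤ m) (hn : 1 ≤ n)
    (hmn : m ≠ n) (h1 : IsNAbelian m C) (h2 : IsNAbelian n C) : Semisimple C := by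
  have msplit : ∀ {A B : C} (f : A ⟶ B), Mono f → ∃ r : B ⟶ A, f ≫ r = 𝟙 A := by
    rcases Nat.lt_or_ge m n with h | h
    · exact fun f hf => mono_splits h h1 h2 f hf
    · exact fun f hf => mono_splits (by omega : n < m) h2 h1 f hf
  intro A B f
  have hH : HT n A B f := HT_of_hasNKernel f (h2.2.1 f).2
  obtain ⟨n', rfl⟩ : ∃ n'', n = n''+1 := ⟨n-1, by omega⟩
  have hH1 : HT 1 A B f := HT_to_one msplit h2.1 n' f hH
  obtain ⟨X0, w, hw0, hfac, hcan⟩ := hH1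
  have hmw : Mono w := ⟨fun {Z} g g' hh => hcan Z g g' hh⟩
  obtain ⟨ρ, hρ⟩ := msplit w hmw
  obtain ⟨I, ι, π, hιπ, hπι⟩ := h2.1.idempotents_split A (𝟙 A - ρ ≫ w) (idem_aux w ρ hρ)
  have hι : Mono ι := ⟨fun {Z} g g' hh => by
    have := congrArg (· ≫ π) hh
    simpa [hιπ] using this⟩
  have hwπ : w ≫ π = 0 := by
    have h0 : (w ≫ π) ≫ ι = 0 := by
      rw [Category.assoc, hπι, Preadditive.comp_sub, Category.comp_id, ← Category.assoc, hρ,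
        Category.id_comp, sub_self]
    exact (cancel_mono ι).1 (by simpa using h0)
  have hmi : Mono (ι ≫ f) := by
    apply Preadditive.mono_of_cancel_zero
    intro Z g hg
    have hg' : (g ≫ ι) ≫ f = 0 := by simpa using hg
    obtain ⟨p, hp⟩ := hfac Z (g ≫ ι) hg'
    have hgi : g = g ≫ ι ≫ π := by rw [hιπ, Category.comp_id]
    rw [hgi, ← Category.assoc, ← hp, Category.assoc, hwπ, comp_zero]
  obtain ⟨ri, hri⟩ := msplit (ι ≫ f) hmi
  refine ⟨I, π, ι ≫ f, IsSplitEpi.mk' ⟨ι, hιπ⟩, IsSplitMono.mk' ⟨ri, hri⟩, ?_⟩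
  rw [← Category.assoc, hπι, Preadditive.sub_comp, Category.id_comp, Category.assoc, hw0,
    comp_zero, sub_zero]
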